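/- A sequence σ : ℕ → ℂ is Lipschitz continuous with respect to the sqrt-distance ρ(j,k) = |√j - √k| if and only if sup_{n ∈ ℕ} √(n+1) · |σ(n+1) - σ(n)| < ∞. -/

import Mathlib

private lemma sqrt_nat_strict_mono {k j : ℕ} (h : k < j) :
    Real.sqrt k < Real.sqrt j := by
  apply Real.sqrt_lt_sqrt (by positivity)
  exact_mod_cast h

private lemma telescope (σ : ℕ → ℂ) (C : ℝ)
    (h : ∀ n : ℕ, ‖σ (n + 1) - σ n‖ ≤ C * (Real.sqrt (n + 1) - Real.sqrt n)) :
    ∀ j k : ℕ, k ≤ j → ‖σ j - σ k‖ ≤ C * (Real.sqrt j - Real.sqrt k) := by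
  intro j
  induction j with
  | zero => intro k hk; interval_cases k; simp
  | succ j ih =>
    intro k hk
    rcases Nat.lt_or_ge k (j + 1) with hlt | hge
    · have hk' : k ≤ j := by omega
      have h1 := ih k hk'
      have h2 := h j
      calc ‖σ (j + 1) - σ k‖
          ≤ ‖σ (j + 1) - σ j‖ + ‖σ j - σ k‖ := by
            have := norm_sub_le_norm_sub_add_norm_sub (σ (j+1)) (σ j) (σ k)
            simpa using this
        _ ≤ C * (Real.sqrt (j + 1) - Real.sqrt j) + C * (Real.sqrt j - Real.sqrt k) := by
            exact add_le_add h2 h1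
        _ = C * (Real.sqrt (((j + 1 : ℕ) : ℝ)) - Real.sqrt k) := by push_cast; ring
    · have : k = j + 1 := by omega
      subst this; simp

theorem lipschitz_sqrt_dist_iff (σ : ℕ → ℂ) :
    (∃ L : ℝ, ∀ j k : ℕ, j ≠ k →
      ‖σ j - σ k‖ / |Real.sqrt j - Real.sqrt k| ≤ L) ↔
    (∃ M : ℝ, ∀ n : ℕ,
      Real.sqrt (n + 1) * ‖σ (n + 1) - σ n‖ ≤ M) := by
  constructor
  · rintro ⟨L, hL⟩
    refine ⟨L, fun n => ?_⟩
    have h := hL (n + 1) n (by omega)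
    have hd : (0:ℝ) < Real.sqrt (n + 1) - Real.sqrt n := by
      have := sqrt_nat_strict_mono (Nat.lt_succ_self n)
      push_cast at this ⊢
      linarith
    set d := Real.sqrt ((n:ℝ) + 1) - Real.sqrt n with hdef
    have habs : |Real.sqrt ((n+1:ℕ)) - Real.sqrt n| = d := by
      push_cast
      rw [abs_of_pos hd]
    rw [habs] at h
    have hA : (0:ℝ) ≤ ‖σ (n + 1) - σ n‖ := norm_nonneg _
    have hle : ‖σ (n + 1) - σ n‖ ≤ L * d := by
      rw [div_le_iff₀ hd] at h; linarith [h]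
    have hL0 : 0 ≤ L := le_trans (div_nonneg hA hd.le) h
    -- √(n+1) * d ≤ 1
    have hs1 : Real.sqrt ((n:ℝ) + 1) ^ 2 = (n:ℝ) + 1 := Real.sq_sqrt (by positivity)
    have hs2 : Real.sqrt (n:ℝ) ^ 2 = (n:ℝ) := Real.sq_sqrt (by positivity)
    have hsn : (0:ℝ) ≤ Real.sqrt (n:ℝ) := Real.sqrt_nonneg _
    have hkey : Real.sqrt ((n:ℝ) + 1) * d ≤ 1 := by
      have : Real.sqrt ((n:ℝ) + 1) * Real.sqrt n ≥ Real.sqrt n * Real.sqrt n := by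
        apply mul_le_mul_of_nonneg_right _ hsn
        nlinarith [Real.sqrt_nonneg ((n:ℝ)+1)]
      simp only [hdef]
      nlinarith
    calc Real.sqrt ((n:ℕ) + 1) * ‖σ (n + 1) - σ n‖
        ≤ Real.sqrt ((n:ℝ) + 1) * (L * d) := by
          push_cast
          apply mul_le_mul_of_nonneg_left hle (Real.sqrt_nonneg _)
      _ = L * (Real.sqrt ((n:ℝ) + 1) * d) := by ring
      _ ≤ L * 1 := mul_le_mul_of_nonneg_left hkey hL0
      _ = L := mul_one L
  · rintro ⟨M, hM⟩
    set C := 2 * max M 0 with hC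
    have hC0 : 0 ≤ C := by positivity
    have hstep : ∀ n : ℕ, ‖σ (n + 1) - σ n‖
        ≤ C * (Real.sqrt (n + 1) - Real.sqrt n) := by
      intro n
      have h := le_trans (hM n) (le_max_left M 0)
      have hs1 : Real.sqrt ((n:ℝ) + 1) ^ 2 = (n:ℝ) + 1 := Real.sq_sqrt (by positivity)
      have hs2 : Real.sqrt (n:ℝ) ^ 2 = (n:ℝ) := Real.sq_sqrt (by positivity)
      have hsn : (0:ℝ) ≤ Real.sqrt (n:ℝ) := Real.sqrt_nonneg _
      have hs1p : (0:ℝ) < Real.sqrt ((n:ℝ) + 1) := Real.sqrt_pos.mpr (by positivity)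
      have hA : (0:ℝ) ≤ ‖σ (n + 1) - σ n‖ := norm_nonneg _
      -- 1 ≤ 2 * √(n+1) * (√(n+1) - √n)
      have hkey : 1 ≤ 2 * Real.sqrt ((n:ℝ) + 1) * (Real.sqrt ((n:ℝ) + 1) - Real.sqrt n) := by
        nlinarith [sq_nonneg (Real.sqrt ((n:ℝ)+1) - Real.sqrt n)]
      push_cast at h ⊢
      have hM0 : (0:ℝ) ≤ max M 0 := le_max_right M 0
      rw [hC]
      nlinarith [mul_le_mul_of_nonneg_left hkey hM0]
    refine ⟨C, fun j k hjk => ?_⟩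
    rcases Nat.lt_or_ge k j with hlt | hge
    · have hd : (0:ℝ) < Real.sqrt j - Real.sqrt k := by
        linarith [sqrt_nat_strict_mono hlt]
      rw [abs_of_pos hd, div_le_iff₀ hd]
      have := telescope σ C hstep j k hlt.le
      linarith
    · have hlt : j < k := by omega
      have hd : (0:ℝ) < Real.sqrt k - Real.sqrt j := by
        linarith [sqrt_nat_strict_mono hlt]
      have habs : |Real.sqrt (j:ℝ) - Real.sqrt k| = Real.sqrt k - Real.sqrt j := by
        rw [abs_sub_comm, abs_of_pos hd]
      rw [habs, div_le_iff₀ hd]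
      have := telescope σ C hstep k j hlt.le
      rw [← norm_neg] at this
      simpa using this.trans_eq (by ring)
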